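/- Let the friendship graph of an FA game be an i-centered octopus graph with head H. If |H| ≥ ⌈n/2⌉, then the partition consisting of the coalition H ∪ {i} together with every remaining agent as a singleton coalition is the unique optimal partition. -/

import Mathlib

open Finset

/-- FA utility of agent `i` with friend set `t` for a coalition `C` containing her:
`u_i(C) = |C ∩ F_i| − |C ∩ E_i| / n`, where `E_i = N \ (F_i ∪ {i})`. -/
def faUtil (n : ℕ) (t : Finset (Fin n)) (i : Fin n) (C : Finset (Fin n)) : ℚ :=
  ((C ∩ t).card : ℚ) - ((C \ (t ∪ {i})).card : ℚ) / (n : ℚ)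

/-- Social welfare of a partition of the agents (`SW(π) = Σ_i u_i(π(i))`). -/
def faSW (n : ℕ) (F : Fin n → Finset (Fin n))
    (π : Finpartition (univ : Finset (Fin n))) : ℚ :=
  ∑ C ∈ π.parts, ∑ i ∈ C, faUtil n (F i) i C

/-- Superadditivity of `x ↦ x * x` on sums of nonnegative integers. -/
lemma octo_sq_sum {β : Type*} (T : Finset β) (g : β → ℤ) (hg : ∀ t ∈ T, 0 ≤ g t) :
    ∑ t ∈ T, g t * g t ≤ (∑ t ∈ T, g t) * (∑ t ∈ T, g t) := by
  induction T using Finset.cons_induction with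
  | empty => simp
  | cons a T ha ih =>
    rw [Finset.sum_cons, Finset.sum_cons]
    have h1 : 0 ≤ g a := hg a (Finset.mem_cons_self _ _)
    have h2 : ∀ t ∈ T, 0 ≤ g t := fun t ht => hg t (Finset.mem_cons_of_mem ht)
    have h3 : 0 ≤ ∑ t ∈ T, g t := Finset.sum_nonneg h2
    nlinarith [ih h2, mul_nonneg h1 h3]

/-- The core integer inequality. -/
lemma octo_core (n s a k m : ℤ) (hn : 1 ≤ n) (hak : a + k = s) (hsn : s + 1 ≤ n)
    (hns : n ≤ 2*s) (ha : 0 ≤ a) (hk : 0 ≤ k) (hm : 0 ≤ m) (hmn : m + s + 1 ≤ n)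
    (hne : a < s ∨ 1 ≤ m) :
    0 < (n+1)*(2*a*k + k - m) + (a+m+1)*(a+m) - (s+1)*s := by
  rcases le_or_gt k 0 with hk0 | hk1
  · have : k = 0 := le_antisymm hk0 hk
    subst this
    have hm1 : 1 ≤ m := by omega
    nlinarith [mul_le_mul_of_nonneg_left (by omega : n ≤ 2*s + m) hm]
  · rcases le_or_gt a 0 with ha0 | ha1
    · have : a = 0 := le_antisymm ha0 ha
      subst this
      nlinarith [sq_nonneg (m - k), sq_nonneg m, mul_nonneg hm hk]
    · nlinarith [mul_pos ha1 hk1, sq_nonneg (m + 2*a - n), mul_nonneg (mul_nonneg ha hk) hm,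
        mul_nonneg hm hk, mul_nonneg ha hm]

section PartLemmas

variable {n : ℕ}

lemma octo_filter_part (π : Finpartition (univ : Finset (Fin n))) (x : Fin n) :
    π.parts.filter (fun C => x ∈ C) = {π.part x} := by
  ext C
  simp only [Finset.mem_filter, Finset.mem_singleton]
  constructor
  · rintro ⟨hC, hxC⟩
    exact ((π.part_eq_of_mem hC hxC)).symm
  · rintro rfl
    exact ⟨π.part_mem.2 (mem_univ x), π.mem_part (mem_univ x)⟩

lemma octo_sum_ite (π : Finpartition (univ : Finset (Fin n))) (x : Fin n)
    (g : Finset (Fin n) → ℤ) :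
    ∑ C ∈ π.parts, (if x ∈ C then g C else 0) = g (π.part x) := by
  rw [← Finset.sum_filter, octo_filter_part, Finset.sum_singleton]

lemma octo_sum_inter (π : Finpartition (univ : Finset (Fin n))) (X : Finset (Fin n)) :
    ∑ C ∈ π.parts, ((C ∩ X).card : ℤ) = (X.card : ℤ) := by
  have h1 : ∀ C : Finset (Fin n), ((C ∩ X).card : ℤ) = ∑ x ∈ X, (if x ∈ C then (1:ℤ) else 0) := by
    intro C
    have h0 : C ∩ X = X.filter (fun x => x ∈ C) := by
      ext y; simp [Finset.mem_filter, and_comm]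
    rw [h0, Finset.natCast_card_filter]
  simp_rw [h1]
  rw [Finset.sum_comm]
  have h2 : ∀ x ∈ X, ∑ C ∈ π.parts, (if x ∈ C then (1:ℤ) else 0) = 1 := by
    intro x _
    exact octo_sum_ite π x (fun _ => 1)
  rw [Finset.sum_congr rfl h2]
  simp

end PartLemmas

/-- Friend-pairs-together count, as an integer. -/
def octoA (n : ℕ) (F : Fin n → Finset (Fin n))
    (π : Finpartition (univ : Finset (Fin n))) : ℤ :=
  ∑ C ∈ π.parts, ∑ j ∈ C, ((C ∩ F j).card : ℤ)

/-- Ordered-pairs-together count, as an integer. -/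
def octoB (n : ℕ) (π : Finpartition (univ : Finset (Fin n))) : ℤ :=
  ∑ C ∈ π.parts, (C.card : ℤ) * ((C.card : ℤ) - 1)

/-- `n` times the social welfare, as an integer. -/
def octoV (n : ℕ) (F : Fin n → Finset (Fin n))
    (π : Finpartition (univ : Finset (Fin n))) : ℤ :=
  ((n : ℤ) + 1) * octoA n F π - octoB n π

lemma octo_mul_pred_nonneg (x : ℕ) : (0:ℤ) ≤ (x:ℤ) * ((x:ℤ) - 1) := by
  rcases Nat.eq_zero_or_pos x with h | h
  · simp [h]
  · have h1 : (1:ℤ) ≤ (x:ℤ) := by exact_mod_cast h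
    nlinarith

lemma octo_two_le_mul_pred (x : ℕ) (hx : 2 ≤ (x:ℤ)) : 2 ≤ (x:ℤ) * ((x:ℤ) - 1) := by
  nlinarith

/-- If the friendship graph is an `i`-centered octopus graph with head `H` and
`|H| ≥ ⌈n/2⌉`, then a partition is optimal iff its coalitions are exactly `H ∪ {i}`
together with every remaining agent as a singleton (unique optimal partition). -/
theorem stmt2 (n : ℕ) (hn : 0 < n) (F : Fin n → Finset (Fin n)) (hF : ∀ j, j ∉ F j)
    (i : Fin n) (H : Finset (Fin n)) (hiH : i ∉ H)
    (hclique : ∀ j ∈ H, ∀ k ∈ H, j ≠ k → k ∈ F j)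
    (hhead : ∀ j ∈ H, i ∈ F j)
    (houtside : ∀ j : Fin n, j ≠ i → ∀ k : Fin n, k ∉ H → k ≠ i →
      k ∉ F j ∧ j ∉ F k ∧ i ∉ F k)
    (hH : (n + 1) / 2 ≤ H.card) :
    ∀ π : Finpartition (univ : Finset (Fin n)),
      (∀ σ : Finpartition (univ : Finset (Fin n)), faSW n F σ ≤ faSW n F π) ↔
        π.parts = insert (insert i H)
          (((univ : Finset (Fin n)) \ insert i H).image fun j => ({j} : Finset (Fin n))) := by
  classical
  set T : Finset (Finset (Fin n)) := insert (insert i H)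
      (((univ : Finset (Fin n)) \ insert i H).image fun j => ({j} : Finset (Fin n))) with hT
  -- basic numbers
  set s : ℤ := (H.card : ℤ) with hs
  clear_value s
  set fs : ℤ := (((insert i H) ∩ F i).card : ℤ) with hfs
  clear_value fs
  have hns : (n : ℤ) ≤ 2 * s := by
    rw [hs]; exact_mod_cast (by omega : n ≤ 2 * H.card)
  have hsn : s + 1 ≤ (n : ℤ) := by
    have hsub : H ⊆ (univ : Finset (Fin n)).erase i := fun x hx =>
      Finset.mem_erase.2 ⟨fun h => hiH (h ▸ hx), mem_univ x⟩
    have := Finset.card_le_card hsub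
    rw [Finset.card_erase_of_mem (mem_univ i), Finset.card_univ, Fintype.card_fin] at this
    have hs1 : H.card + 1 ≤ n := by omega
    rw [hs]; exact_mod_cast hs1
  have hs1 : (1:ℤ) ≤ s := by
    rw [hs]; exact_mod_cast (by omega : 1 ≤ H.card)
  -- structure of friend sets
  have hFj : ∀ j ∈ H, F j = insert i (H.erase j) := by
    intro j hj
    have hjne : j ≠ i := fun h => hiH (h ▸ hj)
    ext x
    simp only [Finset.mem_insert, Finset.mem_erase]
    constructor
    · intro hx
      by_cases hxi : x = i
      · exact Or.inl hxi
      · by_cases hxH : x ∈ H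
        · exact Or.inr ⟨fun h => hF j (h ▸ hx), hxH⟩
        · exact absurd hx (houtside j hjne x hxH hxi).1
    · rintro (rfl | ⟨hxj, hxH⟩)
      · exact hhead j hj
      · exact hclique j hj x hxH (Ne.symm hxj)
  have hFk : ∀ k : Fin n, k ∉ H → k ≠ i → F k = ∅ := by
    intro k hkH hki
    ext x
    simp only [Finset.notMem_empty, iff_false]
    intro hx
    by_cases hxi : x = i
    · exact (houtside k hki k hkH hki).2.2 (hxi ▸ hx)
    · exact (houtside x hxi k hkH hki).2.1 hx
  -- n * SW = V
  have hSW : ∀ π : Finpartition (univ : Finset (Fin n)),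
      (n : ℚ) * faSW n F π = ((octoV n F π : ℤ) : ℚ) := by
    intro π
    have hterm : ∀ C ∈ π.parts, ∀ j ∈ C,
        (n : ℚ) * faUtil n (F j) j C
          = ((n:ℚ) + 1) * ((C ∩ F j).card : ℚ) - (C.card : ℚ) + 1 := by
      intro C hC j hj
      have hkey : (C ∩ (F j ∪ {j})).card + (C \ (F j ∪ {j})).card = C.card :=
        Finset.card_inter_add_card_sdiff _ _
      have hins : C ∩ (F j ∪ {j}) = insert j (C ∩ F j) := by
        ext x
        simp only [Finset.mem_inter, Finset.mem_union, Finset.mem_singleton, Finset.mem_insert]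
        constructor
        · rintro ⟨hxC, hx | rfl⟩
          · exact Or.inr ⟨hxC, hx⟩
          · exact Or.inl rfl
        · rintro (rfl | ⟨hxC, hx⟩)
          · exact ⟨hj, Or.inr rfl⟩
          · exact ⟨hxC, Or.inl hx⟩
      have hjnot : j ∉ C ∩ F j := fun h => hF j (Finset.mem_inter.1 h).2
      rw [hins, Finset.card_insert_of_notMem hjnot] at hkey
      have hcast : ((C \ (F j ∪ {j})).card : ℚ)
          = (C.card : ℚ) - ((C ∩ F j).card : ℚ) - 1 := by
        have : ((C ∩ F j).card + 1) + (C \ (F j ∪ {j})).card = C.card := hkey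
        push_cast [← this]
        ring
      unfold faUtil
      rw [hcast]
      have hn0 : (n : ℚ) ≠ 0 := by positivity
      field_simp
      ring
    have hpart : ∀ C ∈ π.parts, (n:ℚ) * ∑ j ∈ C, faUtil n (F j) j C
        = ((n:ℚ)+1) * (∑ j ∈ C, ((C ∩ F j).card : ℚ))
          - (C.card : ℚ) * ((C.card : ℚ) - 1) := by
      intro C hC
      rw [Finset.mul_sum, Finset.sum_congr rfl (hterm C hC), Finset.sum_add_distrib,
        Finset.sum_sub_distrib, Finset.sum_const, Finset.sum_const, ← Finset.mul_sum]
      simp only [nsmul_eq_mul, mul_one]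
      ring
    calc (n:ℚ) * faSW n F π
        = ∑ C ∈ π.parts, (n:ℚ) * ∑ j ∈ C, faUtil n (F j) j C := by
          rw [faSW, Finset.mul_sum]
      _ = ∑ C ∈ π.parts, (((n:ℚ)+1) * (∑ j ∈ C, ((C ∩ F j).card : ℚ))
            - (C.card : ℚ) * ((C.card : ℚ) - 1)) := Finset.sum_congr rfl hpart
      _ = ((octoV n F π : ℤ) : ℚ) := by
          rw [octoV, octoA, octoB]
          push_cast
          rw [Finset.sum_sub_distrib, Finset.mul_sum]
  have hnQ : (0:ℚ) < n := by exact_mod_cast hn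
  have hcomp : ∀ σ π : Finpartition (univ : Finset (Fin n)),
      (faSW n F σ ≤ faSW n F π ↔ octoV n F σ ≤ octoV n F π) := by
    intro σ π
    rw [← mul_le_mul_iff_right₀ hnQ, hSW, hSW, Int.cast_le]
  have hH1 : 1 ≤ H.card := by omega
  have hCstar_not : insert i H ∉ (univ \ insert i H).image
      (fun j => ({j} : Finset (Fin n))) := by
    intro hmem
    obtain ⟨j, hj, hji⟩ := Finset.mem_image.1 hmem
    have hcard := congrArg Finset.card hji
    rw [Finset.card_singleton, Finset.card_insert_of_notMem hiH] at hcard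
    omega
  have hinj : ∀ x ∈ (univ : Finset (Fin n)) \ insert i H,
      ∀ y ∈ (univ : Finset (Fin n)) \ insert i H,
      ({x} : Finset (Fin n)) = {y} → x = y := by
    intro x _ y _ h
    exact Finset.singleton_injective h
  have hsdiff_props : ∀ j ∈ (univ : Finset (Fin n)) \ insert i H, j ∉ H ∧ j ≠ i := by
    intro j hj
    obtain ⟨-, hjnot⟩ := Finset.mem_sdiff.1 hj
    exact ⟨fun h => hjnot (Finset.mem_insert_of_mem h),
      fun h => hjnot (h ▸ Finset.mem_insert_self i H)⟩
  have hAT : ∑ C ∈ T, ∑ j ∈ C, ((C ∩ F j).card : ℤ) = s * s + fs := by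
    rw [hT, Finset.sum_insert hCstar_not, Finset.sum_image hinj]
    have hz : ∀ j ∈ (univ : Finset (Fin n)) \ insert i H,
        ∑ k ∈ ({j} : Finset (Fin n)), ((({j}:Finset (Fin n)) ∩ F k).card : ℤ) = 0 := by
      intro j hj
      obtain ⟨hjH, hji⟩ := hsdiff_props j hj
      rw [Finset.sum_singleton, hFk j hjH hji]
      simp
    rw [Finset.sum_congr rfl hz, Finset.sum_const_zero, add_zero]
    rw [Finset.sum_insert hiH]
    have hHterm : ∀ j ∈ H, (((insert i H) ∩ F j).card : ℤ) = s := by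
      intro j hj
      rw [hFj j hj]
      have hsub : insert i H ∩ insert i (H.erase j) = insert i (H.erase j) := by
        rw [Finset.inter_eq_right]
        exact Finset.insert_subset_insert _ (Finset.erase_subset _ _)
      rw [hsub, Finset.card_insert_of_notMem (fun h => hiH (Finset.mem_of_mem_erase h)),
        Finset.card_erase_of_mem hj, hs]
      push_cast [Nat.sub_add_cancel hH1]
      ring
    rw [Finset.sum_congr rfl hHterm, Finset.sum_const, nsmul_eq_mul, hfs, hs]
    ring
  have hBT : ∑ C ∈ T, (C.card : ℤ) * ((C.card : ℤ) - 1) = (s + 1) * s := by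
    rw [hT, Finset.sum_insert hCstar_not, Finset.sum_image hinj]
    have hz : ∀ j ∈ (univ : Finset (Fin n)) \ insert i H,
        ((({j} : Finset (Fin n)).card : ℤ)) * ((({j} : Finset (Fin n)).card : ℤ) - 1) = 0 := by
      intro j _
      simp
    rw [Finset.sum_congr rfl hz, Finset.sum_const_zero, add_zero,
      Finset.card_insert_of_notMem hiH, hs]
    push_cast
    ring
  have hkey : ∀ π : Finpartition (univ : Finset (Fin n)), π.parts ≠ T →
      octoV n F π < ((n:ℤ)+1) * (s*s + fs) - (s+1)*s := by
    intro π hπ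
    set C0 := π.part i with hC0def
    have hiC0 : i ∈ C0 := π.mem_part (mem_univ i)
    have hC0mem : C0 ∈ π.parts := π.part_mem.2 (mem_univ i)
    set a : ℤ := ((C0 ∩ H).card : ℤ) with ha_def
    set m : ℤ := ((C0 \ insert i H).card : ℤ) with hm_def
    set fC : ℤ := ((C0 ∩ F i).card : ℤ) with hfC_def
    clear_value a m fC
    have ha0 : 0 ≤ a := by rw [ha_def]; exact Int.natCast_nonneg _
    have hm0 : 0 ≤ m := by rw [hm_def]; exact Int.natCast_nonneg _
    have hinter : C0 ∩ insert i H = insert i (C0 ∩ H) := by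
      ext x
      simp only [Finset.mem_inter, Finset.mem_insert]
      constructor
      · rintro ⟨hxC, rfl | hx⟩
        exacts [Or.inl rfl, Or.inr ⟨hxC, hx⟩]
      · rintro (rfl | ⟨h1, h2⟩)
        exacts [⟨hiC0, Or.inl rfl⟩, ⟨h1, Or.inr h2⟩]
    have hiCH : i ∉ C0 ∩ H := fun h => hiH (Finset.mem_inter.1 h).2
    have hcC0 : (C0.card : ℤ) = a + m + 1 := by
      have h2 := Finset.card_inter_add_card_sdiff C0 (insert i H)
      rw [hinter, Finset.card_insert_of_notMem hiCH] at h2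
      rw [ha_def, hm_def]
      push_cast [← h2]
      ring
    have hApart : ∀ C ∈ π.parts, ∑ j ∈ C, ((C ∩ F j).card : ℤ)
        = ((C ∩ H).card : ℤ) * (((C ∩ H).card : ℤ) - 1)
          + (if i ∈ C then ((C ∩ H).card : ℤ) + ((C ∩ F i).card : ℤ) else 0) := by
      intro C _
      have hu : C ∩ H ∪ C \ H = C := by
        rw [Finset.union_comm, Finset.sdiff_union_inter]
      have hdisj : Disjoint (C ∩ H) (C \ H) := (Finset.disjoint_sdiff_inter C H).symm
      have hsplit : ∑ j ∈ C, ((C ∩ F j).card : ℤ)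
          = ∑ j ∈ C ∩ H, ((C ∩ F j).card : ℤ) + ∑ j ∈ C \ H, ((C ∩ F j).card : ℤ) := by
        rw [← Finset.sum_union hdisj, hu]
      have hCH : ∀ j ∈ C ∩ H, ((C ∩ F j).card : ℤ)
          = ((C ∩ H).card : ℤ) - 1 + (if i ∈ C then 1 else 0) := by
        intro j hj
        obtain ⟨hjC, hjH⟩ := Finset.mem_inter.1 hj
        have hpos : 1 ≤ (C ∩ H).card := Finset.card_pos.2 ⟨j, hj⟩
        have hiner : i ∉ (C ∩ H).erase j :=
          fun h => hiH (Finset.mem_inter.1 (Finset.mem_of_mem_erase h)).2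
        rw [hFj j hjH]
        by_cases hiC : i ∈ C
        · have heq : C ∩ insert i (H.erase j) = insert i ((C ∩ H).erase j) := by
            ext x
            simp only [Finset.mem_inter, Finset.mem_insert, Finset.mem_erase]
            constructor
            · rintro ⟨hxC, rfl | ⟨hxj, hxH⟩⟩
              exacts [Or.inl rfl, Or.inr ⟨hxj, hxC, hxH⟩]
            · rintro (rfl | ⟨hxj, hxC, hxH⟩)
              exacts [⟨hiC, Or.inl rfl⟩, ⟨hxC, Or.inr ⟨hxj, hxH⟩⟩]
          rw [heq, Finset.card_insert_of_notMem hiner, Finset.card_erase_of_mem hj,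
            if_pos hiC]
          push_cast [Nat.sub_add_cancel hpos]
          ring
        · have heq : C ∩ insert i (H.erase j) = (C ∩ H).erase j := by
            ext x
            simp only [Finset.mem_inter, Finset.mem_insert, Finset.mem_erase]
            constructor
            · rintro ⟨hxC, rfl | ⟨hxj, hxH⟩⟩
              exacts [absurd hxC hiC, ⟨hxj, hxC, hxH⟩]
            · rintro ⟨hxj, hxC, hxH⟩
              exact ⟨hxC, Or.inr ⟨hxj, hxH⟩⟩
          rw [heq, Finset.card_erase_of_mem hj, if_neg hiC]
          push_cast [Nat.cast_sub hpos]
          ring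
      have hCd : ∀ j ∈ C \ H, ((C ∩ F j).card : ℤ)
          = (if j = i then ((C ∩ F i).card : ℤ) else 0) := by
        intro j hj
        obtain ⟨hjC, hjH⟩ := Finset.mem_sdiff.1 hj
        by_cases hji : j = i
        · rw [if_pos hji, hji]
        · rw [if_neg hji, hFk j hjH hji]
          simp
      rw [hsplit, Finset.sum_congr rfl hCH, Finset.sum_congr rfl hCd,
        Finset.sum_ite_eq' (C \ H) i (fun _ => ((C ∩ F i).card : ℤ)),
        Finset.sum_const, nsmul_eq_mul]
      have hiCd : i ∈ C \ H ↔ i ∈ C := by simp [hiH]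
      by_cases hiC : i ∈ C
      · rw [if_pos (hiCd.2 hiC), if_pos hiC, if_pos hiC]
        ring
      · rw [if_neg (fun h => hiC (hiCd.1 h)), if_neg hiC, if_neg hiC]
        ring
    have hAπ : octoA n F π = (∑ C ∈ π.parts, ((C ∩ H).card : ℤ) * (((C ∩ H).card : ℤ) - 1))
        + (a + fC) := by
      rw [octoA]
      rw [Finset.sum_congr rfl hApart, Finset.sum_add_distrib]
      rw [octo_sum_ite π i (fun C => ((C ∩ H).card : ℤ) + ((C ∩ F i).card : ℤ)),
        ha_def, hfC_def, hC0def]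
    have hsum_b : ∑ C ∈ π.parts, ((C ∩ H).card : ℤ) = s := by
      rw [hs]; exact octo_sum_inter π H
    have hadd_erase := Finset.add_sum_erase π.parts (fun C => ((C ∩ H).card : ℤ)) hC0mem
    have hb_erase : ∑ C ∈ π.parts.erase C0, ((C ∩ H).card : ℤ) = s - a := by
      rw [← ha_def] at hadd_erase
      linarith [hsum_b, hadd_erase]
    have hS_bound : ∑ C ∈ π.parts, ((C ∩ H).card : ℤ) * (((C ∩ H).card : ℤ) - 1)
        ≤ a * (a - 1) + (s - a) * ((s - a) - 1) := by
      have hnn : ∀ t ∈ π.parts.erase C0, (0:ℤ) ≤ ((t ∩ H).card : ℤ) :=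
        fun t _ => Int.natCast_nonneg _
      have h2 := octo_sq_sum (π.parts.erase C0) (fun C => ((C ∩ H).card : ℤ)) hnn
      rw [hb_erase] at h2
      have h3 : ∑ C ∈ π.parts.erase C0, ((C ∩ H).card : ℤ) * (((C ∩ H).card : ℤ) - 1)
          = (∑ C ∈ π.parts.erase C0, ((C ∩ H).card : ℤ) * ((C ∩ H).card : ℤ)) - (s - a) := by
        rw [← hb_erase, ← Finset.sum_sub_distrib]
        exact Finset.sum_congr rfl fun x _ => by ring
      have h4 := Finset.add_sum_erase π.parts
        (fun C => ((C ∩ H).card : ℤ) * (((C ∩ H).card : ℤ) - 1)) hC0mem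
      rw [← ha_def] at h4
      linarith [h2, h3, h4]
    have hfC_le : fC ≤ fs + m := by
      have hsub : C0 ∩ F i ⊆ (insert i H ∩ F i) ∪ (C0 \ insert i H) := by
        intro x hx
        obtain ⟨hx1, hx2⟩ := Finset.mem_inter.1 hx
        by_cases hxH : x ∈ insert i H
        · exact Finset.mem_union_left _ (Finset.mem_inter.2 ⟨hxH, hx2⟩)
        · exact Finset.mem_union_right _ (Finset.mem_sdiff.2 ⟨hx1, hxH⟩)
      have h1 := Finset.card_le_card hsub
      have h2 := Finset.card_union_le (insert i H ∩ F i) (C0 \ insert i H)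
      rw [hfC_def, hfs, hm_def]
      exact_mod_cast h1.trans h2
    have hB_nonneg : ∀ C ∈ π.parts.erase C0, (0:ℤ) ≤ (C.card : ℤ) * ((C.card : ℤ) - 1) :=
      fun C _ => octo_mul_pred_nonneg C.card
    have hBsplit : octoB n π = (C0.card : ℤ) * ((C0.card : ℤ) - 1)
        + ∑ C ∈ π.parts.erase C0, (C.card : ℤ) * ((C.card : ℤ) - 1) := by
      rw [octoB]
      rw [← Finset.add_sum_erase _ _ hC0mem]
    have hB_ge : (a + m + 1) * (a + m) ≤ octoB n π := by
      rw [hBsplit, hcC0]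
      have h5 := Finset.sum_nonneg hB_nonneg
      nlinarith [h5]
    have hc0n : a + m + 1 ≤ (n : ℤ) := by
      rw [← hcC0]
      have : C0.card ≤ n := by simpa using Finset.card_le_univ C0
      exact_mod_cast this
    have hmsn : m + s + 1 ≤ (n : ℤ) := by
      have hdisj2 : Disjoint (C0 \ insert i H) (insert i H) := Finset.sdiff_disjoint
      have hle : (C0 \ insert i H).card + (insert i H).card ≤ n := by
        rw [← Finset.card_union_of_disjoint hdisj2]
        simpa using Finset.card_le_card
          (Finset.subset_univ (C0 \ insert i H ∪ insert i H))
      rw [Finset.card_insert_of_notMem hiH] at hle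
      have h3 : (((C0 \ insert i H).card : ℤ)) + ((H.card : ℤ) + 1) ≤ (n : ℤ) := by
        exact_mod_cast hle
      rw [hm_def, hs]
      linarith
    have ha_le : a ≤ s := by
      rw [ha_def, hs]
      exact_mod_cast Finset.card_le_card (Finset.inter_subset_right)
    by_cases hcase : a = s ∧ m = 0
    · obtain ⟨haa, hmm0⟩ := hcase
      have hcardeq : (C0 ∩ H).card = H.card := by
        rw [ha_def, hs] at haa
        exact_mod_cast haa
      have hCH_eq : C0 ∩ H = H :=
        Finset.eq_of_subset_of_card_le (Finset.inter_subset_right) (le_of_eq hcardeq.symm)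
      have hHC0 : H ⊆ C0 := by
        intro x hx
        rw [← hCH_eq] at hx
        exact (Finset.mem_inter.1 hx).1
      have hC0sub : C0 ⊆ insert i H := by
        have hmz : (C0 \ insert i H).card = 0 := by
          rw [hm_def] at hmm0
          exact_mod_cast hmm0
        exact Finset.sdiff_eq_empty_iff_subset.1 (Finset.card_eq_zero.1 hmz)
      have hC0eq : C0 = insert i H :=
        Finset.Subset.antisymm hC0sub (Finset.insert_subset hiC0 hHC0)
      have hSz : ∀ C ∈ π.parts.erase C0,
          ((C ∩ H).card : ℤ) * (((C ∩ H).card : ℤ) - 1) = 0 := by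
        intro C hC
        obtain ⟨hne, hmem⟩ := Finset.mem_erase.1 hC
        have hdisj3 : Disjoint C C0 := π.disjoint hmem hC0mem hne
        have hCHempty : C ∩ H = ∅ := by
          apply Finset.eq_empty_of_forall_notMem
          intro x hx
          obtain ⟨hx1, hx2⟩ := Finset.mem_inter.1 hx
          exact Finset.disjoint_left.1 hdisj3 hx1 (hHC0 hx2)
        rw [hCHempty]
        simp
      have hfCeq : fC = fs := by rw [hfC_def, hfs, hC0eq]
      have hAeq : octoA n F π = s * s + fs := by
        rw [hAπ]
        have h4 := Finset.add_sum_erase π.parts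
          (fun C => ((C ∩ H).card : ℤ) * (((C ∩ H).card : ℤ) - 1)) hC0mem
        rw [← h4, Finset.sum_eq_zero hSz, hfCeq]
        rw [← ha_def, haa]
        ring
      have hbig : ∃ D ∈ π.parts.erase C0, 2 ≤ (D.card : ℤ) := by
        by_contra hno
        push_neg at hno
        apply hπ
        rw [hT]
        ext D
        constructor
        · intro hD
          by_cases hDC0 : D = C0
          · exact Finset.mem_insert.2 (Or.inl (hDC0.trans hC0eq))
          · have hD' : D ∈ π.parts.erase C0 := Finset.mem_erase.2 ⟨hDC0, hD⟩
            have hcard := hno D hD'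
            obtain ⟨x, hx⟩ := π.nonempty_of_mem_parts hD
            have hcard1 : D.card = 1 := by
              have h5 : (D.card : ℤ) < 2 := hcard
              have h6 : D.card < 2 := by exact_mod_cast h5
              have h7 : 1 ≤ D.card := Finset.card_pos.2 ⟨x, hx⟩
              omega
            obtain ⟨y, hy⟩ := Finset.card_eq_one.1 hcard1
            apply Finset.mem_insert.2
            right
            apply Finset.mem_image.2
            refine ⟨y, ?_, hy.symm⟩
            have hyD : y ∈ D := hy ▸ Finset.mem_singleton_self y
            have hdisj3 : Disjoint D C0 := π.disjoint hD hC0mem hDC0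
            have hynot : y ∉ C0 := Finset.disjoint_left.1 hdisj3 hyD
            rw [Finset.mem_sdiff]
            exact ⟨mem_univ y, by rwa [← hC0eq]⟩
        · intro hD
          rcases Finset.mem_insert.1 hD with rfl | hD'
          · rw [← hC0eq]; exact hC0mem
          · obtain ⟨y, hy, rfl⟩ := Finset.mem_image.1 hD'
            have hD'mem : π.part y ∈ π.parts := π.part_mem.2 (mem_univ y)
            have hyD' : y ∈ π.part y := π.mem_part (mem_univ y)
            have hne : π.part y ≠ C0 := by
              intro h
              have h8 : y ∈ C0 := h ▸ hyD'
              rw [hC0eq] at h8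
              exact (Finset.mem_sdiff.1 hy).2 h8
            have hcard := hno (π.part y) (Finset.mem_erase.2 ⟨hne, hD'mem⟩)
            have hcard1 : (π.part y).card = 1 := by
              have h5 : (π.part y).card < 2 := by exact_mod_cast hcard
              have h7 : 1 ≤ (π.part y).card := Finset.card_pos.2 ⟨y, hyD'⟩
              omega
            obtain ⟨z, hz⟩ := Finset.card_eq_one.1 hcard1
            have hyz : y = z := by
              rw [hz] at hyD'
              exact Finset.mem_singleton.1 hyD'
            rw [hyz, ← hz]
            exact hD'mem
      obtain ⟨D, hD, hD2⟩ := hbig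
      have hsumD : 2 ≤ ∑ C ∈ π.parts.erase C0, (C.card : ℤ) * ((C.card : ℤ) - 1) := by
        calc (2:ℤ) ≤ (D.card : ℤ) * ((D.card : ℤ) - 1) := octo_two_le_mul_pred D.card hD2
          _ ≤ _ := Finset.single_le_sum hB_nonneg hD
      have hc0card : (C0.card : ℤ) = s + 1 := by rw [hcC0, haa, hmm0]; ring
      have hBge2 : (s + 1) * s + 2 ≤ octoB n π := by
        rw [hBsplit, hc0card]
        linarith [hsumD]
      rw [octoV]
      rw [hAeq]
      linarith [hBge2]
    · have hcase' : a < s ∨ 1 ≤ m := by omega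
      have hAb : octoA n F π ≤ a * (a - 1) + (s - a) * ((s - a) - 1) + a + fs + m := by
        rw [hAπ]
        linarith [hS_bound, hfC_le]
      have hcore := octo_core (n : ℤ) s a (s - a) m (by exact_mod_cast hn) (by ring)
        hsn hns ha0 (by linarith) hm0 hmsn hcase'
      rw [octoV]
      have hnpos : (0:ℤ) ≤ (n : ℤ) + 1 := by positivity
      linarith [mul_le_mul_of_nonneg_left hAb hnpos, hB_ge, hcore]
  have hTpart : ∃ πT : Finpartition (univ : Finset (Fin n)), πT.parts = T := by
    refine ⟨⟨T, ?_, ?_, ?_⟩, rfl⟩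
    · rw [Finset.supIndep_iff_pairwiseDisjoint]
      intro x hx y hy hxy
      rw [Finset.mem_coe, hT] at hx hy
      have hget : ∀ z ∈ T, z = insert i H ∨ ∃ u, u ∉ insert i H ∧ z = {u} := by
        intro z hz
        rcases Finset.mem_insert.1 hz with rfl | hz'
        · exact Or.inl rfl
        · obtain ⟨u, hu, rfl⟩ := Finset.mem_image.1 hz'
          exact Or.inr ⟨u, (Finset.mem_sdiff.1 hu).2, rfl⟩
      rcases hget x (by rwa [hT]) with rfl | ⟨u, hu, rfl⟩ <;>
        rcases hget y (by rwa [hT]) with rfl | ⟨v, hv, rfl⟩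
      · exact absurd rfl hxy
      · exact Finset.disjoint_singleton_right.2 hv
      · exact Finset.disjoint_singleton_left.2 hu
      · have huv : u ≠ v := fun h => hxy (by rw [h])
        show Disjoint ({u} : Finset (Fin n)) {v}
        rw [Finset.disjoint_singleton_left, Finset.mem_singleton]
        exact huv
    · apply Finset.Subset.antisymm
      · intro x _
        exact mem_univ x
      · intro x _
        rw [Finset.mem_sup]
        by_cases hx : x ∈ insert i H
        · exact ⟨insert i H, Finset.mem_insert_self _ _, hx⟩
        · refine ⟨{x}, ?_, Finset.mem_singleton_self x⟩
          rw [hT]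
          exact Finset.mem_insert.2 (Or.inr (Finset.mem_image.2
            ⟨x, Finset.mem_sdiff.2 ⟨mem_univ x, hx⟩, rfl⟩))
    · rw [Finset.bot_eq_empty, hT]
      intro hmem
      rcases Finset.mem_insert.1 hmem with h | h
      · exact (Finset.insert_nonempty i H).ne_empty h.symm
      · obtain ⟨u, -, hu⟩ := Finset.mem_image.1 h
        exact (Finset.singleton_nonempty u).ne_empty hu
  obtain ⟨πT, hπT⟩ := hTpart
  have hval : ∀ σ : Finpartition (univ : Finset (Fin n)), σ.parts = T →
      octoV n F σ = ((n:ℤ)+1) * (s*s + fs) - (s+1)*s := by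
    intro σ hσ
    rw [octoV, octoA, octoB, hσ, hAT, hBT]
  intro π
  constructor
  · intro hopt
    by_contra hne
    have h1 := hkey π hne
    have h2 := (hcomp πT π).1 (hopt πT)
    rw [hval πT hπT] at h2
    linarith
  · intro hp σ
    rw [hcomp σ π]
    have hp' : π.parts = T := hp
    rw [hval π hp']
    by_cases hσ : σ.parts = T
    · rw [hval σ hσ]
    · exact le_of_lt (hkey σ hσ)
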